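/- Let λ ∈ ℝ. Suppose the zero function α₀ ≡ 0 is a lower solution of Problem 3 (i.e. λ ≥ 0) and suppose there exists an upper solution β₀ ∈ C²_loc((0,1/2];ℝ) of Problem 3, that is, β₀''(t) ≥ β₀(t)²/(8t²) + λ/2 for all t ∈ (0,1/2], lim_{t→0⁺} β₀(t)/√t = 0 and β₀(1/2) ≥ β₀'(1/2), which additionally satisfies β₀(t) ≤ 0 for all t ∈ (0,1/2], lim_{t→0⁺} |β₀(t)|/t < +∞ and lim_{t→0⁺} β₀(t) = 0. Then Problem 3 has at least one solution u ∈ C²_loc((0,1/2];ℝ) with β₀(t) ≤ u(t) ≤ 0 for all t ∈ (0,1/2]. -/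

import Mathlib

open Real Filter Set Topology intervalIntegral

/-- `u` is twice continuously differentiable on every compact subinterval
`[a,b] ⊂ (0, 1/2]`. -/
def C2loc (u : ℝ → ℝ) : Prop :=
  ∀ a b : ℝ, 0 < a → b ≤ 1/2 → ContDiffOn ℝ 2 u (Set.Icc a b)

namespace Stmt15

open MeasureTheory

noncomputable section

def SS : Set ℝ := Set.Ioc 0 (1/2)

lemma measSS : MeasurableSet SS := measurableSet_Ioc

def Fio (lam : ℝ) (v : ℝ → ℝ) : ℝ → ℝ :=
  SS.indicator (fun s => (v s)^2/(8*s^2) + lam/2)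

def Pp (D : ℝ → ℝ) (t : ℝ) : ℝ := ∫ s in (0:ℝ)..t, D s
def Qq (D : ℝ → ℝ) (t : ℝ) : ℝ := ∫ s in (0:ℝ)..t, s * D s
def Aa (D : ℝ → ℝ) : ℝ := -2 * ∫ s in (0:ℝ)..(1/2:ℝ), (1/2 + s) * D s
def Kk (D : ℝ → ℝ) : ℝ → ℝ := fun t => Aa D * t + t * Pp D t - Qq D t

/-- Kernel data: a nonnegative bounded function supported in `SS`. -/
structure Ker (D : ℝ → ℝ) (M : ℝ) : Prop where
  meas : AEStronglyMeasurable D volume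
  nonneg : ∀ s, 0 ≤ D s
  bdd : ∀ s, D s ≤ M
  supp : ∀ s, s ∉ SS → D s = 0

namespace Ker

variable {D : ℝ → ℝ} {M : ℝ}

lemma M_nonneg (h : Ker D M) : 0 ≤ M := (h.nonneg 0).trans (h.bdd 0)

lemma integrable_aux (h : Ker D M) (k : ℝ → ℝ) (hk : Continuous k)
    (hbd : ∀ s ∈ SS, |k s| ≤ 1) : Integrable (fun s => k s * D s) volume := by
  have hg : Integrable (SS.indicator (fun _ => M)) volume := by
    rw [integrable_indicator_iff measSS]
    exact integrableOn_const (by simp [SS])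
  refine hg.mono' (hk.aestronglyMeasurable.mul h.meas) ?_
  refine Eventually.of_forall (fun s => ?_)
  by_cases hs : s ∈ SS
  · rw [indicator_of_mem hs]
    have := h.nonneg s
    have := h.bdd s
    have := hbd s hs
    calc ‖k s * D s‖ = |k s| * |D s| := by rw [norm_mul]; rfl
    _ ≤ 1 * M := by
        apply mul_le_mul (hbd s hs) (by rwa [abs_of_nonneg (h.nonneg s)]) (abs_nonneg _) zero_le_one
    _ = M := one_mul M
  · rw [indicator_of_notMem hs, h.supp s hs]
    simp

lemma integrable (h : Ker D M) : Integrable D volume := by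
  have := h.integrable_aux (fun _ => 1) continuous_const (by intro s _; simp)
  simpa using this

lemma integrable_mul (h : Ker D M) : Integrable (fun s => s * D s) volume := by
  refine h.integrable_aux _ continuous_id ?_
  rintro s ⟨h1, h2⟩
  rw [abs_of_pos h1]; linarith

lemma integrable_half (h : Ker D M) : Integrable (fun s => (1/2 + s) * D s) volume := by
  refine h.integrable_aux _ (by continuity) ?_
  rintro s ⟨h1, h2⟩
  rw [abs_of_pos (by linarith)]; linarith

lemma ii (h : Ker D M) (a b : ℝ) : IntervalIntegrable D volume a b :=
  h.integrable.intervalIntegrable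

lemma ii_mul (h : Ker D M) (a b : ℝ) : IntervalIntegrable (fun s => s * D s) volume a b :=
  h.integrable_mul.intervalIntegrable

lemma ii_half (h : Ker D M) (a b : ℝ) :
    IntervalIntegrable (fun s => (1/2 + s) * D s) volume a b :=
  h.integrable_half.intervalIntegrable

/-- The combination `t * P - Q` as a single integral. -/
lemma tPQ (h : Ker D M) (t : ℝ) :
    t * Pp D t - Qq D t = ∫ s in (0:ℝ)..t, (t - s) * D s := by
  rw [Pp, Qq]
  rw [← intervalIntegral.integral_const_mul]
  rw [← intervalIntegral.integral_sub ((h.ii 0 t).const_mul t) (h.ii_mul 0 t)]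
  congr 1
  ext s
  ring

lemma kk_eq (h : Ker D M) (t : ℝ) :
    Kk D t = Aa D * t + ∫ s in (0:ℝ)..t, (t - s) * D s := by
  rw [Kk, ← h.tPQ]; ring

lemma ii_kernel (h : Ker D M) (t : ℝ) (a b : ℝ) :
    IntervalIntegrable (fun s => (t - s) * D s) volume a b := by
  have : (fun s => (t - s) * D s) = (fun s => t * D s - s * D s) := by funext s; ring
  rw [this]
  exact ((h.integrable.const_mul t).sub h.integrable_mul).intervalIntegrable

lemma ii_kernel2 (h : Ker D M) (t : ℝ) (a b : ℝ) :
    IntervalIntegrable (fun s => 2*t*(1/2 + s) * D s) volume a b := by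
  have : (fun s => 2*t*(1/2 + s) * D s) = (fun s => (2*t) * ((1/2 + s) * D s)) := by
    funext s; ring
  rw [this]
  exact (h.integrable_half.const_mul (2*t)).intervalIntegrable

lemma sign (h : Ker D M) {t : ℝ} (h0 : 0 ≤ t) (h2 : t ≤ 1/2) : Kk D t ≤ 0 := by
  rw [h.kk_eq]
  have step1 : (∫ s in (0:ℝ)..t, (t - s) * D s) ≤ ∫ s in (0:ℝ)..t, 2*t*(1/2 + s) * D s := by
    apply intervalIntegral.integral_mono_on h0 (h.ii_kernel t 0 t) (h.ii_kernel2 t 0 t)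
    intro s hs
    have hD := h.nonneg s
    have h1 : t - s ≤ 2*t*(1/2+s) := by nlinarith [hs.1, hs.2]
    exact mul_le_mul_of_nonneg_right h1 hD
  have step2 : (∫ s in (0:ℝ)..t, 2*t*(1/2 + s) * D s)
      ≤ ∫ s in (0:ℝ)..(1/2:ℝ), 2*t*(1/2 + s) * D s := by
    apply intervalIntegral.integral_mono_interval le_rfl h0 h2 ?_ (h.ii_kernel2 t 0 (1/2))
    filter_upwards [ae_restrict_mem measurableSet_Ioc] with s hs
    have hD := h.nonneg s
    have hs1 : (0:ℝ) < s := hs.1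
    positivity
  have step3 : (∫ s in (0:ℝ)..(1/2:ℝ), 2*t*(1/2 + s) * D s)
      = -(Aa D) * t := by
    have : (fun s => 2*t*(1/2 + s) * D s) = (fun s => (2*t) * ((1/2 + s) * D s)) := by
      funext s; ring
    rw [this, intervalIntegral.integral_const_mul, Aa]
    ring
  nlinarith [step1.trans (step2.trans_eq step3)]

lemma sub_ker {D₂ : ℝ → ℝ} {M₂ : ℝ} (h : Ker D M) (h₂ : Ker D₂ M₂)
    (hle : ∀ s, D₂ s ≤ D s) : Ker (fun s => D s - D₂ s) M := by
  constructor
  · exact h.meas.sub h₂.meas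
  · intro s; have := hle s; simp; linarith
  · intro s; have := h.bdd s; have := h₂.nonneg s; simp; linarith
  · intro s hs; rw [h.supp s hs, h₂.supp s hs]; simp

lemma kk_sub {D₂ : ℝ → ℝ} {M₂ : ℝ} (h : Ker D M) (h₂ : Ker D₂ M₂) (t : ℝ) :
    Kk (fun s => D s - D₂ s) t = Kk D t - Kk D₂ t := by
  have e1 : Aa (fun s => D s - D₂ s) = Aa D - Aa D₂ := by
    rw [Aa, Aa, Aa]
    have : (fun s => (1/2 + s) * (D s - D₂ s))
        = (fun s => (1/2 + s) * D s - (1/2 + s) * D₂ s) := by funext s; ring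
    rw [show (∫ s in (0:ℝ)..(1/2:ℝ), (1/2 + s) * (D s - D₂ s))
        = ∫ s in (0:ℝ)..(1/2:ℝ), ((1/2 + s) * D s - (1/2 + s) * D₂ s) by rw [this]]
    rw [intervalIntegral.integral_sub (h.ii_half 0 (1/2)) (h₂.ii_half 0 (1/2))]
    ring
  have e2 : Pp (fun s => D s - D₂ s) t = Pp D t - Pp D₂ t := by
    rw [Pp, Pp, Pp, intervalIntegral.integral_sub (h.ii 0 t) (h₂.ii 0 t)]
  have e3 : Qq (fun s => D s - D₂ s) t = Qq D t - Qq D₂ t := by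
    rw [Qq, Qq, Qq]
    have : (fun s => s * (D s - D₂ s)) = (fun s => s * D s - s * D₂ s) := by funext s; ring
    rw [show (∫ s in (0:ℝ)..t, s * (D s - D₂ s))
        = ∫ s in (0:ℝ)..t, (s * D s - s * D₂ s) by rw [this]]
    rw [intervalIntegral.integral_sub (h.ii_mul 0 t) (h₂.ii_mul 0 t)]
  rw [Kk, Kk, Kk, e1, e2, e3]
  ring

/-- Monotone comparison of kernels. -/
lemma kk_mono {D₂ : ℝ → ℝ} {M₂ : ℝ} (h : Ker D M) (h₂ : Ker D₂ M₂)
    (hle : ∀ s, D₂ s ≤ D s) {t : ℝ} (h0 : 0 ≤ t) (h2 : t ≤ 1/2) :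
    Kk D t ≤ Kk D₂ t := by
  have := (h.sub_ker h₂ hle).sign h0 h2
  rw [h.kk_sub h₂] at this
  linarith

lemma abs_Aa (h : Ker D M) : |Aa D| ≤ M := by
  rw [Aa, abs_mul, show |(-2:ℝ)| = 2 by norm_num]
  have : |∫ s in (0:ℝ)..(1/2:ℝ), (1/2 + s) * D s| ≤ M * |(1/2:ℝ) - 0| := by
    rw [← Real.norm_eq_abs]
    apply intervalIntegral.norm_integral_le_of_norm_le_const
    intro s hs
    rw [uIoc_of_le (by norm_num)] at hs
    have h1 := hs.1; have h2 := hs.2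
    have hD0 := h.nonneg s; have hDM := h.bdd s
    rw [Real.norm_eq_abs, abs_mul, abs_of_pos (by linarith), abs_of_nonneg hD0]
    nlinarith
  rw [show |(1/2:ℝ) - 0| = 1/2 by norm_num] at this
  linarith [abs_nonneg (∫ s in (0:ℝ)..(1/2:ℝ), (1/2 + s) * D s)]

lemma size (h : Ker D M) {t : ℝ} (h0 : 0 ≤ t) (h2 : t ≤ 1/2) : |Kk D t| ≤ 2 * M * t := by
  rw [h.kk_eq]
  have hM := h.M_nonneg
  have hb : |∫ s in (0:ℝ)..t, (t - s) * D s| ≤ M * t := by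
    have : |∫ s in (0:ℝ)..t, (t - s) * D s| ≤ M * |t - 0| := by
      rw [← Real.norm_eq_abs]
      apply intervalIntegral.norm_integral_le_of_norm_le_const
      intro s hs
      rw [uIoc_of_le h0] at hs
      have h1 := hs.1; have h2' := hs.2
      have hD0 := h.nonneg s; have hDM := h.bdd s
      rw [Real.norm_eq_abs, abs_mul, abs_of_nonneg (by linarith), abs_of_nonneg hD0]
      nlinarith
    rwa [show |t - 0| = t by rw [sub_zero, abs_of_nonneg h0]] at this
  have h1 : |Aa D * t| ≤ M * t := by
    rw [abs_mul, abs_of_nonneg h0]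
    exact mul_le_mul_of_nonneg_right h.abs_Aa h0
  calc |Aa D * t + ∫ s in (0:ℝ)..t, (t - s) * D s|
      ≤ |Aa D * t| + |∫ s in (0:ℝ)..t, (t - s) * D s| := abs_add_le _ _
  _ ≤ M * t + M * t := add_le_add h1 hb
  _ = 2 * M * t := by ring

lemma continuous_Pp (h : Ker D M) : Continuous (Pp D) :=
  intervalIntegral.continuous_primitive h.ii 0

lemma continuous_Qq (h : Ker D M) : Continuous (Qq D) :=
  intervalIntegral.continuous_primitive h.ii_mul 0

lemma continuous_kk (h : Ker D M) : Continuous (Kk D) := by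
  unfold Kk
  exact ((continuous_const.mul continuous_id).add
    (continuous_id.mul h.continuous_Pp)).sub h.continuous_Qq

lemma smaf (h : Ker D M) (t : ℝ) : StronglyMeasurableAtFilter D (𝓝 t) :=
  ⟨univ, univ_mem, by rw [Measure.restrict_univ]; exact h.meas⟩

lemma smaf_mul (h : Ker D M) (t : ℝ) :
    StronglyMeasurableAtFilter (fun s => s * D s) (𝓝 t) :=
  ⟨univ, univ_mem, by rw [Measure.restrict_univ]; exact h.integrable_mul.aestronglyMeasurable⟩

lemma hasDerivAt_kk (h : Ker D M) {t : ℝ} (hc : ContinuousAt D t) :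
    HasDerivAt (Kk D) (Aa D + Pp D t) t := by
  have hP : HasDerivAt (Pp D) (D t) t :=
    intervalIntegral.integral_hasDerivAt_right (h.ii 0 t) (h.smaf t) hc
  have hQ : HasDerivAt (Qq D) (t * D t) t := by
    apply intervalIntegral.integral_hasDerivAt_right (h.ii_mul 0 t) (h.smaf_mul t)
    exact (continuous_id.continuousAt).mul hc
  have : HasDerivAt (fun u => Aa D * u + u * Pp D u - Qq D u)
      (Aa D * 1 + (1 * Pp D t + t * D t) - t * D t) t := by
    exact ((hasDerivAt_id t).const_mul (Aa D)).add
      (((hasDerivAt_id t).mul hP)) |>.sub hQ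
  convert this using 1
  · rfl
  ring

/-- The key boundary identity `Kk D (1/2) = Aa D + Pp D (1/2)`. -/
lemma bc (h : Ker D M) : Kk D (1/2) = Aa D + Pp D (1/2) := by
  have e : (∫ s in (0:ℝ)..(1/2:ℝ), (1/2 + s) * D s)
      = (1/2) * Pp D (1/2) + Qq D (1/2) := by
    rw [Pp, Qq, ← intervalIntegral.integral_const_mul,
      ← intervalIntegral.integral_add ((h.ii 0 (1/2)).const_mul (1/2)) (h.ii_mul 0 (1/2))]
    congr 1; ext s; ring
  rw [Kk, Aa, e]
  ring

end Ker

/-! ### Facts about `Fio` -/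

lemma ker_Fio (lam : ℝ) (hlam : 0 ≤ lam) {β v : ℝ → ℝ} {C : ℝ}
    (hβC : ∀ t ∈ SS, |β t| ≤ C * t)
    (hv : AEStronglyMeasurable v (volume.restrict SS))
    (hb : ∀ t ∈ SS, β t ≤ v t ∧ v t ≤ 0) :
    Ker (Fio lam v) (C^2/8 + lam/2) := by
  constructor
  · rw [Fio, aestronglyMeasurable_indicator_iff measSS]
    have h8 : AEMeasurable (fun s : ℝ => 8*s^2) (volume.restrict SS) :=
      ((measurable_id.pow_const 2).const_mul 8).aemeasurable
    exact (((hv.aemeasurable.pow_const 2).div h8).add_const (lam/2)).aestronglyMeasurable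
  · intro s
    rw [Fio]
    by_cases hs : s ∈ SS
    · rw [indicator_of_mem hs]
      have : 0 ≤ (v s)^2/(8*s^2) := by positivity
      linarith
    · rw [indicator_of_notMem hs]
  · intro s
    rw [Fio]
    by_cases hs : s ∈ SS
    · rw [indicator_of_mem hs]
      have hs1 : 0 < s := hs.1
      have hvb := hb s hs
      have hβb := hβC s hs
      have habs : |β s| ≥ -(β s) := neg_le_abs (β s)
      have h1 : (v s)^2 ≤ C^2 * s^2 := by nlinarith [hvb.1, hvb.2]
      have h2 : (v s)^2/(8*s^2) ≤ (C^2 * s^2)/(8*s^2) := by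
        gcongr
      have he : (C^2 * s^2)/(8*s^2) = C^2/8 := by
        rw [mul_comm (8:ℝ) (s^2), mul_comm (C^2) (s^2), mul_div_mul_left _ _ (by positivity : s^2 ≠ 0)]
      linarith
    · rw [indicator_of_notMem hs]
      positivity
  · intro s hs
    exact indicator_of_notMem hs _

lemma Fio_mono (lam : ℝ) {v₁ v₂ : ℝ → ℝ}
    (h1 : ∀ t ∈ SS, v₁ t ≤ 0) (h2 : ∀ t ∈ SS, v₂ t ≤ 0)
    (hle : ∀ t ∈ SS, v₁ t ≤ v₂ t) :
    ∀ s, Fio lam v₂ s ≤ Fio lam v₁ s := by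
  intro s
  rw [Fio, Fio]
  by_cases hs : s ∈ SS
  · rw [indicator_of_mem hs, indicator_of_mem hs]
    have hsq : (v₂ s)^2 ≤ (v₁ s)^2 := by nlinarith [h1 s hs, h2 s hs, hle s hs]
    have h8 : (0:ℝ) ≤ 8*s^2 := by positivity
    have h2 : (v₂ s)^2/(8*s^2) ≤ (v₁ s)^2/(8*s^2) := by
      gcongr
    linarith
  · rw [indicator_of_notMem hs, indicator_of_notMem hs]

/-! ### Facts about `β` -/

lemma contOn_of_C2loc {β : ℝ → ℝ} (hβ : C2loc β) : ContinuousOn β SS := by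
  intro t ht
  have h1 : (0:ℝ) < t := ht.1
  have hIcc : t ∈ Icc (t/2) (1/2) := ⟨by linarith, ht.2⟩
  have hcw : ContinuousWithinAt β (Icc (t/2) (1/2)) t :=
    (hβ (t/2) (1/2) (by linarith) le_rfl).continuousOn.continuousWithinAt hIcc
  apply hcw.mono_of_mem_nhdsWithin
  have hmem : SS ∩ Ioi (t/2) ∈ 𝓝[SS] t :=
    inter_mem_nhdsWithin SS (Ioi_mem_nhds (by linarith))
  apply mem_of_superset hmem
  rintro s ⟨hs1, hs2⟩
  exact ⟨le_of_lt hs2, hs1.2⟩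

lemma interior_reg {β : ℝ → ℝ} (hβ : C2loc β) {x : ℝ} (hx : x ∈ Ioo (0:ℝ) (1/2)) :
    DifferentiableAt ℝ β x ∧ DifferentiableAt ℝ (deriv β) x ∧ ContinuousAt (deriv β) x := by
  obtain ⟨hx1, hx2⟩ := hx
  set a := x/2 with ha
  set b := (x + 1/2)/2 with hb
  have hxab : x ∈ Ioo a b := ⟨by simp [ha]; linarith, by simp [hb]; linarith⟩
  have hmem : Ioo a b ∈ 𝓝 x := Ioo_mem_nhds hxab.1 hxab.2
  have h2 : ContDiffOn ℝ 2 β (Ioo a b) :=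
    (hβ a b (by simp [ha]; linarith) (by simp [hb]; linarith)).mono Ioo_subset_Icc_self
  have hd1 : DifferentiableAt ℝ β x := by
    have := h2.differentiableOn (by norm_num)
    exact this.differentiableAt hmem
  have hd : ContDiffOn ℝ 1 (deriv β) (Ioo a b) :=
    h2.deriv_of_isOpen isOpen_Ioo (by norm_num)
  have hd2 : DifferentiableAt ℝ (deriv β) x := by
    have := hd.differentiableOn (by norm_num)
    exact this.differentiableAt hmem
  exact ⟨hd1, hd2, hd2.continuousAt⟩

lemma bound_exists {β : ℝ → ℝ} (hβ : C2loc β)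
    (hβfin : ∃ L : ℝ, Tendsto (fun t => |β t| / t) (𝓝[>] (0:ℝ)) (𝓝 L)) :
    ∃ C : ℝ, 0 ≤ C ∧ ∀ t ∈ SS, |β t| ≤ C * t := by
  obtain ⟨L, hL⟩ := hβfin
  have hev : ∀ᶠ t in 𝓝[>] (0:ℝ), |β t| / t < L + 1 :=
    hL.eventually_lt_const (lt_add_one L)
  rw [eventually_nhdsWithin_iff] at hev
  obtain ⟨δ, hδpos, hδ⟩ := Metric.eventually_nhds_iff.1 hev
  set δ₀ := min δ (1/2) with hδ₀
  have hδ₀pos : 0 < δ₀ := lt_min hδpos (by norm_num)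
  have hδ₀le : δ₀ ≤ 1/2 := min_le_right _ _
  -- bound on the compact part
  have hcont : ContinuousOn β (Icc δ₀ (1/2)) := by
    apply (contOn_of_C2loc hβ).mono
    intro s hs
    exact ⟨lt_of_lt_of_le hδ₀pos hs.1, hs.2⟩
  obtain ⟨B, hB⟩ := (isCompact_Icc).exists_bound_of_continuousOn hcont
  refine ⟨max 0 (max (L+1) (B/δ₀)), le_max_left _ _, ?_⟩
  intro t ht
  have ht1 : 0 < t := ht.1
  by_cases hcase : t < δ₀
  · have h1 : |β t| / t < L + 1 := by
      apply hδ ?_ ht1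
      rw [Real.dist_eq, sub_zero, abs_of_pos ht1]
      exact lt_of_lt_of_le hcase (min_le_left _ _)
    have : |β t| < (L+1) * t := by
      rw [div_lt_iff₀ ht1] at h1
      linarith
    calc |β t| ≤ (L+1)*t := this.le
    _ ≤ max 0 (max (L+1) (B/δ₀)) * t := by
        apply mul_le_mul_of_nonneg_right ((le_max_left _ _).trans (le_max_right _ _)) ht1.le
  · push_neg at hcase
    have hBt : |β t| ≤ B := by
      have := hB t ⟨hcase, ht.2⟩
      rwa [Real.norm_eq_abs] at this
    have hBpos : 0 ≤ B := (abs_nonneg _).trans hBt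
    calc |β t| ≤ B := hBt
    _ = (B/δ₀) * δ₀ := by field_simp
    _ ≤ (B/δ₀) * t := by
        apply mul_le_mul_of_nonneg_left hcase (by positivity)
    _ ≤ max 0 (max (L+1) (B/δ₀)) * t := by
        apply mul_le_mul_of_nonneg_right ((le_max_right _ _).trans (le_max_right _ _)) ht1.le

def Top (lam : ℝ) (v : ℝ → ℝ) : ℝ → ℝ := Kk (Fio lam v)

/-! ### The comparison lemma: `β ≤ Top lam β` on `SS`. -/

lemma beta_le_Top (lam : ℝ) (hlam : 0 < lam) {β : ℝ → ℝ} {C : ℝ}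
    (hβC : ∀ t ∈ SS, |β t| ≤ C * t) (hβ : C2loc β)
    (hupper : ∀ t ∈ SS, deriv (deriv β) t ≥ β t ^ 2 / (8 * t ^ 2) + lam / 2)
    (hβbc : β (1/2) ≥ deriv β (1/2))
    (hβneg : ∀ t ∈ SS, β t ≤ 0)
    (hβlim : Tendsto β (𝓝[>] (0:ℝ)) (𝓝 0)) :
    ∀ t ∈ SS, β t ≤ Top lam β t := by
  have h12SS : (1/2:ℝ) ∈ SS := ⟨by norm_num, le_rfl⟩
  set M := C^2/8 + lam/2 with hM
  have hker : Ker (Fio lam β) M :=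
    ker_Fio lam hlam.le hβC ((contOn_of_C2loc hβ).aestronglyMeasurable measSS)
      (fun t ht => ⟨le_rfl, hβneg t ht⟩)
  set D := Fio lam β with hD
  -- value of D on SS
  have hDval : ∀ x ∈ SS, D x = β x ^ 2 / (8 * x ^ 2) + lam / 2 := by
    intro x hx
    rw [hD, Fio, indicator_of_mem hx]
  -- continuity of `deriv β` at 1/2, via `hupper`
  have hd2pos : deriv (deriv β) (1/2) ≠ 0 := by
    have h1 := hupper (1/2) h12SS
    have h2 : 0 ≤ β (1/2) ^ 2 / (8 * (1/2:ℝ) ^ 2) := by positivity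
    intro h0
    rw [h0] at h1
    nlinarith
  have hβd12 : ContinuousAt (deriv β) (1/2) :=
    (differentiableAt_of_deriv_ne_zero hd2pos).continuousAt
  -- continuity of D at interior points
  have hDcont : ∀ x ∈ Ioo (0:ℝ) (1/2), ContinuousAt D x := by
    intro x hx
    have hxS : x ∈ SS := ⟨hx.1, hx.2.le⟩
    have hx8 : (8 * x^2 : ℝ) ≠ 0 := (mul_pos (by norm_num) (pow_pos hx.1 2)).ne' 
    have hin : ContinuousAt (fun s => β s ^ 2 / (8 * s ^ 2) + lam / 2) x := by
      have hβc : ContinuousAt β x := (interior_reg hβ hx).1.continuousAt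
      exact ((hβc.pow 2).div (by fun_prop) hx8).add continuousAt_const
    apply hin.congr
    filter_upwards [Ioo_mem_nhds hx.1 hx.2] with s hs
    exact (indicator_of_mem (α := ℝ) (f := fun z : ℝ => β z ^ 2 / (8 * z ^ 2) + lam / 2)
      (⟨hs.1, hs.2.le⟩ : s ∈ SS)).symm
  -- derivative of Top lam β at interior points
  have hTd : ∀ x ∈ Ioo (0:ℝ) (1/2), HasDerivAt (Kk D) (Aa D + Pp D x) x :=
    fun x hx => hker.hasDerivAt_kk (hDcont x hx)
  set φ : ℝ → ℝ := fun t => Kk D t - β t with hφ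
  set g : ℝ → ℝ := fun x => Aa D + Pp D x - deriv β x with hg
  have hφd : ∀ x ∈ Ioo (0:ℝ) (1/2), HasDerivAt φ (g x) x := by
    intro x hx
    exact (hTd x hx).sub (interior_reg hβ hx).1.hasDerivAt
  -- g is antitone
  have hganti : AntitoneOn g (Ioo (0:ℝ) (1/2)) := by
    apply antitoneOn_of_deriv_nonpos (convex_Ioo _ _)
    · apply ContinuousOn.sub
      · exact (continuous_const.add hker.continuous_Pp).continuousOn
      · exact fun x hx => (interior_reg hβ hx).2.2.continuousWithinAt
    · rw [interior_Ioo]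
      intro x hx
      apply DifferentiableAt.differentiableWithinAt
      have h1 : HasDerivAt (fun u => Aa D + Pp D u) (D x) x :=
        (intervalIntegral.integral_hasDerivAt_right (hker.ii 0 x) (hker.smaf x)
          (hDcont x hx)).const_add (Aa D)
      exact (h1.differentiableAt).sub (interior_reg hβ hx).2.1
    · rw [interior_Ioo]
      intro x hx
      have h1 : HasDerivAt (fun u => Aa D + Pp D u) (D x) x :=
        (intervalIntegral.integral_hasDerivAt_right (hker.ii 0 x) (hker.smaf x)
          (hDcont x hx)).const_add (Aa D)
      have h2 : HasDerivAt g (D x - deriv (deriv β) x) x :=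
        h1.sub (interior_reg hβ hx).2.1.hasDerivAt
      rw [h2.deriv]
      have h3 := hupper x ⟨hx.1, hx.2.le⟩
      rw [hDval x ⟨hx.1, hx.2.le⟩]
      linarith
  set e : ℝ := Aa D + Pp D (1/2) - deriv β (1/2) with he
  have hge : Tendsto g (𝓝[<] (1/2:ℝ)) (𝓝 e) := by
    apply Tendsto.sub
    · exact ((continuous_const.add hker.continuous_Pp).tendsto _).mono_left nhdsWithin_le_nhds
    · exact hβd12.tendsto.mono_left nhdsWithin_le_nhds
  have hgge : ∀ ξ ∈ Ioo (0:ℝ) (1/2), e ≤ g ξ := by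
    intro ξ hξ
    apply le_of_tendsto hge
    filter_upwards [Ioo_mem_nhdsLT_of_mem (⟨hξ.2, le_rfl⟩ : (1/2:ℝ) ∈ Ioc ξ (1/2))] with ζ hζ
    exact hganti hξ ⟨hξ.1.trans hζ.1, hζ.2⟩ hζ.1.le
  -- MVT helper
  have mvt : ∀ p q : ℝ, 0 < p → p < q → q ≤ 1/2 →
      ∃ c ∈ Ioo p q, g c = (φ q - φ p)/(q - p) := by
    intro p q hp hpq hq
    have hcont : ContinuousOn φ (Icc p q) :=
      (hker.continuous_kk.continuousOn).sub (hβ p q hp hq).continuousOn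
    have hdiff : DifferentiableOn ℝ φ (Ioo p q) := by
      intro x hx
      exact (hφd x ⟨hp.trans hx.1, lt_of_lt_of_le hx.2 hq⟩).differentiableAt.differentiableWithinAt
    obtain ⟨c, hc, hceq⟩ := exists_deriv_eq_slope φ hpq hcont hdiff
    refine ⟨c, hc, ?_⟩
    rw [← hceq]
    exact ((hφd c ⟨hp.trans hc.1, lt_of_lt_of_le hc.2 hq⟩).deriv).symm
  -- φ tends to 0 at 0⁺
  have hφ0 : Tendsto φ (𝓝[>] (0:ℝ)) (𝓝 0) := by
    have hkk0 : Tendsto (Kk D) (𝓝[>] (0:ℝ)) (𝓝 0) := by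
      have : Tendsto (Kk D) (𝓝 (0:ℝ)) (𝓝 (Kk D 0)) := hker.continuous_kk.tendsto 0
      have h0 : Kk D 0 = 0 := by
        simp [Kk, Pp, Qq]
      rw [h0] at this
      exact this.mono_left nhdsWithin_le_nhds
    have := hkk0.sub hβlim
    simpa using this
  -- φ(1/2) ≤ e
  have hφhalf_le : φ (1/2) ≤ e := by
    show Kk D (1/2) - β (1/2) ≤ Aa D + Pp D (1/2) - deriv β (1/2)
    rw [hker.bc]
    linarith [hβbc]
  -- φ(1/2) ≥ e/2
  have hφhalf_ge : e * (1/2) ≤ φ (1/2) := by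
    have h1 : Tendsto (fun t => φ (1/2) - φ t) (𝓝[>] (0:ℝ)) (𝓝 (φ (1/2))) := by
      have := (tendsto_const_nhds (x := φ (1/2)) (f := 𝓝[>] (0:ℝ))).sub hφ0
      simpa using this
    have h2 : Tendsto (fun t : ℝ => e * (1/2 - t)) (𝓝[>] (0:ℝ)) (𝓝 (e * (1/2))) := by
      have : Tendsto (fun t : ℝ => e * (1/2 - t)) (𝓝 (0:ℝ)) (𝓝 (e * (1/2 - 0))) := by
        apply Tendsto.const_mul
        exact tendsto_const_nhds.sub tendsto_id
      rw [show (1/2 - 0 : ℝ) = 1/2 by norm_num] at this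
      exact this.mono_left nhdsWithin_le_nhds
    apply le_of_tendsto_of_tendsto h2 h1
    filter_upwards [Ioo_mem_nhdsGT_of_mem (⟨le_rfl, by norm_num⟩ : (0:ℝ) ∈ Ico 0 (1/2:ℝ))]
      with t htIoo
    obtain ⟨c, hc, hceq⟩ := mvt t (1/2) htIoo.1 htIoo.2 le_rfl
    have hce := hgge c ⟨htIoo.1.trans hc.1, hc.2⟩
    rw [hceq] at hce
    have hpos : (0:ℝ) < 1/2 - t := by linarith [htIoo.2]
    calc e * (1/2 - t) ≤ ((φ (1/2) - φ t)/(1/2 - t)) * (1/2 - t) :=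
          mul_le_mul_of_nonneg_right hce hpos.le
    _ = φ (1/2) - φ t := div_mul_cancel₀ _ hpos.ne' 
  have hφhalf : 0 ≤ φ (1/2) := by linarith
  -- conclusion
  intro t ht
  have hφdef : ∀ x, φ x = Kk D x - β x := fun _ => rfl
  clear_value φ
  rcases eq_or_lt_of_le ht.2 with hteq | htlt
  · rw [hteq]
    have h' := hφdef (1/2)
    show β (1/2) ≤ Kk D (1/2)
    linarith [hφhalf]
  · by_contra hneg
    push_neg at hneg
    have hneg' : Kk D t < β t := hneg
    have hφt : φ t < 0 := by rw [hφdef]; linarith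
    have htIoo : t ∈ Ioo (0:ℝ) (1/2) := ⟨ht.1, htlt⟩
    -- pick s near 0 with φ s > φ t / 2
    have hev1 : ∀ᶠ s in 𝓝[>] (0:ℝ), φ t / 2 < φ s :=
      hφ0.eventually_const_lt (by linarith : φ t / 2 < 0)
    have hev2 : Ioo (0:ℝ) t ∈ 𝓝[>] (0:ℝ) :=
      Ioo_mem_nhdsGT_of_mem (⟨le_rfl, ht.1⟩ : (0:ℝ) ∈ Ico 0 t)
    obtain ⟨s, hs1, hs2⟩ := (hev1.and hev2).exists
    obtain ⟨ξ₁, hξ₁, heq₁⟩ := mvt s t hs2.1 hs2.2 ht.2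
    obtain ⟨ξ₂, hξ₂, heq₂⟩ := mvt t (1/2) ht.1 htlt le_rfl
    have hgneg : g ξ₁ < 0 := by
      rw [heq₁]
      apply div_neg_of_neg_of_pos (by linarith) (by linarith [hξ₁.1, hξ₁.2])
    have hξ12 : ξ₁ ≤ ξ₂ := by linarith [hξ₁.2, hξ₂.1]
    have hg2 : g ξ₂ ≤ g ξ₁ :=
      hganti ⟨hs2.1.trans hξ₁.1, hξ₁.2.trans htlt⟩ ⟨ht.1.trans hξ₂.1, hξ₂.2⟩ hξ12
    have hcontr : φ (1/2) - φ t < 0 := by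
      have h5 : (φ (1/2) - φ t)/(1/2 - t) < 0 := by rw [← heq₂]; linarith
      have h6 : (0:ℝ) < 1/2 - t := by linarith
      by_contra hcc
      push_neg at hcc
      have := div_nonneg hcc h6.le
      linarith
    have h8 := hφdef (1/2)
    have h9 := hφdef t
    linarith [hφhalf]

/-! ### The monotone iteration -/

def seqU (lam : ℝ) : ℕ → ℝ → ℝ
  | 0 => fun _ => 0
  | n+1 => Top lam (seqU lam (n))

def wl (lam : ℝ) : ℝ → ℝ := fun t => ⨅ n, seqU lam n t

lemma core (lam : ℝ) (hlam : 0 < lam) {β : ℝ → ℝ} {C : ℝ} (hC0 : 0 ≤ C)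
    (hβC : ∀ t ∈ SS, |β t| ≤ C * t) (hβ : C2loc β)
    (hupper : ∀ t ∈ SS, deriv (deriv β) t ≥ β t ^ 2 / (8 * t ^ 2) + lam / 2)
    (hβbc : β (1/2) ≥ deriv β (1/2))
    (hβneg : ∀ t ∈ SS, β t ≤ 0)
    (hβlim : Tendsto β (𝓝[>] (0:ℝ)) (𝓝 0)) :
    (∀ t ∈ SS, β t ≤ wl lam t ∧ wl lam t ≤ 0) ∧ ContinuousOn (wl lam) SS ∧
      (∀ t ∈ SS, wl lam t = Kk (Fio lam (wl lam)) t) ∧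
      Ker (Fio lam (wl lam)) (C^2/8 + lam/2) := by
  set M := C^2/8 + lam/2 with hM
  set u : ℕ → ℝ → ℝ := seqU lam with hu
  have hTβ := beta_le_Top lam hlam hβC hβ hupper hβbc hβneg hβlim
  have hkerof : ∀ v : ℝ → ℝ, Continuous v → (∀ t ∈ SS, β t ≤ v t ∧ v t ≤ 0) →
      Ker (Fio lam v) M :=
    fun v hc hb => ker_Fio lam hlam.le hβC (hc.aestronglyMeasurable.restrict) hb
  -- the basic induction
  have main : ∀ n, Continuous (u n) ∧ (∀ t ∈ SS, β t ≤ u n t ∧ u n t ≤ 0) ∧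
      (∀ t ∈ SS, u (n+1) t ≤ u n t) := by
    intro n
    induction n with
    | zero =>
      refine ⟨continuous_const, fun t ht => ⟨hβneg t ht, le_rfl⟩, ?_⟩
      intro t ht
      have hker0 : Ker (Fio lam (u 0)) M :=
        hkerof _ continuous_const (fun t ht => ⟨hβneg t ht, le_rfl⟩)
      exact hker0.sign ht.1.le ht.2
    | succ n ih =>
      obtain ⟨ihc, ihb, ihm⟩ := ih
      have hkn : Ker (Fio lam (u n)) M := hkerof _ ihc ihb
      have hcont1 : Continuous (u (n+1)) := hkn.continuous_kk
      have hb1 : ∀ t ∈ SS, β t ≤ u (n+1) t ∧ u (n+1) t ≤ 0 := by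
        intro t ht
        constructor
        · calc β t ≤ Top lam β t := hTβ t ht
          _ ≤ u (n+1) t := by
              have hkβ : Ker (Fio lam β) M :=
                ker_Fio lam hlam.le hβC ((contOn_of_C2loc hβ).aestronglyMeasurable measSS)
                  (fun t ht => ⟨le_rfl, hβneg t ht⟩)
              have hle := Fio_mono lam hβneg (fun t ht => (ihb t ht).2)
                (fun t ht => (ihb t ht).1)
              exact hkβ.kk_mono hkn hle ht.1.le ht.2
        · exact hkn.sign ht.1.le ht.2
      refine ⟨hcont1, hb1, ?_⟩
      intro t ht
      have hkn1 : Ker (Fio lam (u (n+1))) M := hkerof _ hcont1 hb1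
      have hle := Fio_mono lam (fun t ht => (hb1 t ht).2) (fun t ht => (ihb t ht).2) ihm
      exact hkn1.kk_mono hkn hle ht.1.le ht.2
  -- pointwise convergence
  have hanti : ∀ t ∈ SS, Antitone (fun n => u n t) := by
    intro t ht
    apply antitone_nat_of_succ_le
    intro n
    exact (main n).2.2 t ht
  have hbdd : ∀ t ∈ SS, BddBelow (Set.range (fun n => u n t)) := by
    intro t ht
    refine ⟨β t, ?_⟩
    rintro x ⟨n, rfl⟩
    exact ((main n).2.1 t ht).1
  have hconv : ∀ t ∈ SS, Tendsto (fun n => u n t) atTop (𝓝 (wl lam t)) := by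
    intro t ht
    exact tendsto_atTop_ciInf (hanti t ht) (hbdd t ht)
  have hwb : ∀ t ∈ SS, β t ≤ wl lam t ∧ wl lam t ≤ 0 := by
    intro t ht
    constructor
    · exact le_ciInf (fun n => ((main n).2.1 t ht).1)
    · exact (ciInf_le (hbdd t ht) 0).trans le_rfl
  -- measurability of the limit
  have hwmeas : AEStronglyMeasurable (wl lam) (volume.restrict SS) := by
    apply aestronglyMeasurable_of_tendsto_ae atTop
      (fun n => ((main n).1.aestronglyMeasurable.restrict))
    filter_upwards [ae_restrict_mem measSS] with t ht
    exact hconv t ht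
  have hkerw : Ker (Fio lam (wl lam)) M := ker_Fio lam hlam.le hβC hwmeas hwb
  -- the fixed point property via dominated convergence
  have hfix : ∀ t ∈ SS, wl lam t = Kk (Fio lam (wl lam)) t := by
    intro t ht
    have lim1 : Tendsto (fun n => u (n+1) t) atTop (𝓝 (wl lam t)) :=
      (hconv t ht).comp (tendsto_add_atTop_nat 1)
    -- pointwise convergence of the kernels on SS
    have hFconv : ∀ x ∈ SS, Tendsto (fun n => Fio lam (u n) x) atTop
        (𝓝 (Fio lam (wl lam) x)) := by
      intro x hx
      have h1 : Tendsto (fun n => (u n x)^2/(8*x^2) + lam/2) atTop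
          (𝓝 ((wl lam x)^2/(8*x^2) + lam/2)) := by
        apply Tendsto.add_const
        apply Tendsto.div_const
        exact (hconv x hx).pow 2
      have e1 : ∀ v : ℝ → ℝ, Fio lam v x = (v x)^2/(8*x^2) + lam/2 :=
        fun v => indicator_of_mem hx _
      rw [e1]
      have e2 : (fun n => Fio lam (u n) x) = fun n => (u n x)^2/(8*x^2) + lam/2 := by
        funext n; rw [e1]
      rw [e2]
      exact h1
    -- DCT for the three integrals
    have hdct : ∀ (k : ℝ → ℝ), Continuous k → (∀ s ∈ SS, |k s| ≤ 1) → ∀ b ∈ SS,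
        Tendsto (fun n => ∫ s in (0:ℝ)..b, k s * Fio lam (u n) s) atTop
          (𝓝 (∫ s in (0:ℝ)..b, k s * Fio lam (wl lam) s)) := by
      intro k hk hk1 b hb
      apply intervalIntegral.tendsto_integral_filter_of_dominated_convergence
        (bound := fun _ => M)
      · apply Eventually.of_forall
        intro n
        exact (hk.aestronglyMeasurable.mul ((hkerof _ (main n).1 (main n).2.1).meas)).restrict
      · apply Eventually.of_forall
        intro n
        apply Eventually.of_forall
        intro x hx
        rw [uIoc_of_le hb.1.le] at hx
        have hxS : x ∈ SS := ⟨hx.1, hx.2.trans hb.2⟩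
        have hker := hkerof _ (main n).1 (main n).2.1
        rw [Real.norm_eq_abs, abs_mul, abs_of_nonneg (hker.nonneg _)]
        calc |k x| * Fio lam (u n) x ≤ 1 * M :=
          mul_le_mul (hk1 x hxS) (hker.bdd x) (hker.nonneg x) zero_le_one
        _ = M := one_mul M
      · exact intervalIntegrable_const
      · apply Eventually.of_forall
        intro x hx
        rw [uIoc_of_le hb.1.le] at hx
        have hxS : x ∈ SS := ⟨hx.1, hx.2.trans hb.2⟩
        exact (hFconv x hxS).const_mul (k x)
    have h12 : (1/2 : ℝ) ∈ SS := ⟨by norm_num, le_rfl⟩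
    have cAa : Tendsto (fun n => Aa (Fio lam (u n))) atTop (𝓝 (Aa (Fio lam (wl lam)))) := by
      have := (hdct (fun s => 1/2 + s) (by fun_prop) ?_ (1/2) h12).const_mul (-2)
      · exact this
      · rintro s ⟨h1, h2⟩
        rw [abs_of_pos (by linarith)]; linarith
    have cP : Tendsto (fun n => Pp (Fio lam (u n)) t) atTop
        (𝓝 (Pp (Fio lam (wl lam)) t)) := by
      have := hdct (fun _ => 1) continuous_const (by intro s _; norm_num) t ht
      simpa [one_mul, Pp] using this
    have cQ : Tendsto (fun n => Qq (Fio lam (u n)) t) atTop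
        (𝓝 (Qq (Fio lam (wl lam)) t)) := by
      apply hdct (fun s => s) continuous_id
      · rintro s ⟨h1, h2⟩
        rw [abs_of_pos h1]; linarith
      · exact ht
    have lim2 : Tendsto (fun n => u (n+1) t) atTop (𝓝 (Kk (Fio lam (wl lam)) t)) := by
      have : (fun n => u (n+1) t)
          = fun n => Aa (Fio lam (u n)) * t + t * Pp (Fio lam (u n)) t
            - Qq (Fio lam (u n)) t := by
        funext n; rfl
      rw [this, Kk]
      exact ((cAa.mul_const t).add (cP.const_mul t)).sub cQ
    exact tendsto_nhds_unique lim1 lim2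
  have hwcont : ContinuousOn (wl lam) SS :=
    (hkerw.continuous_kk.continuousOn).congr hfix
  exact ⟨hwb, hwcont, hfix, hkerw⟩

/-! ### The solution -/

def gext (lam : ℝ) : ℝ → ℝ := fun s =>
  if s ≤ (1/2:ℝ) then (if 0 < s then 0 else lam/2) else (wl lam (1/2))^2/2 + lam/2

def hfun (lam : ℝ) : ℝ → ℝ := fun s => Fio lam (wl lam) s + gext lam s

def Vf (lam : ℝ) (t : ℝ) : ℝ := ∫ s in (0:ℝ)..t, hfun lam s
def Wf (lam : ℝ) (t : ℝ) : ℝ := ∫ s in (0:ℝ)..t, s * hfun lam s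
def Af (lam : ℝ) : ℝ := -2 * ∫ s in (0:ℝ)..(1/2:ℝ), (1/2 + s) * hfun lam s
def Uf (lam : ℝ) : ℝ → ℝ := fun t => Af lam * t + t * Vf lam t - Wf lam t

lemma gext_meas (lam : ℝ) : Measurable (gext lam) := by
  unfold gext
  apply Measurable.ite (measurableSet_le measurable_id measurable_const)
  · exact Measurable.ite (measurableSet_lt measurable_const measurable_id)
      measurable_const measurable_const
  · exact measurable_const

lemma hfun_on_SS (lam : ℝ) {s : ℝ} (hs : s ∈ SS) :
    hfun lam s = (wl lam s)^2/(8*s^2) + lam/2 := by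
  unfold hfun gext
  rw [if_pos hs.2, if_pos hs.1, Fio, indicator_of_mem hs]
  ring

lemma hfun_ge_half (lam : ℝ) {s : ℝ} (hs : (1/2:ℝ) ≤ s) :
    hfun lam s = (wl lam (1/2))^2/2 + lam/2 := by
  rcases eq_or_lt_of_le hs with heq | hlt
  · rw [← heq, hfun_on_SS lam (⟨by norm_num, le_rfl⟩ : (1/2:ℝ) ∈ SS)]
    norm_num
  · unfold hfun gext
    rw [if_neg (not_le.2 hlt), Fio, indicator_of_notMem (by
      intro hc
      exact absurd hc.2 (not_le.2 hlt))]
    ring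

section UfFacts

variable {lam : ℝ} {β : ℝ → ℝ} {C : ℝ}

/-- Bundled facts we need about `wl lam`. -/
structure WFacts (lam : ℝ) (β : ℝ → ℝ) (C : ℝ) : Prop where
  hlam : 0 < lam
  hwb : ∀ t ∈ SS, β t ≤ wl lam t ∧ wl lam t ≤ 0
  hwcont : ContinuousOn (wl lam) SS
  hfix : ∀ t ∈ SS, wl lam t = Kk (Fio lam (wl lam)) t
  hkerw : Ker (Fio lam (wl lam)) (C^2/8 + lam/2)

namespace WFacts

variable (hw : WFacts lam β C)
include hw

/-- A global bound for `hfun`. -/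
def B (lam : ℝ) (C : ℝ) : ℝ := C^2/8 + lam/2 + ((wl lam (1/2))^2/2 + lam/2)

lemma hfun_nonneg : ∀ s, 0 ≤ hfun lam s := by
  intro s
  unfold hfun gext
  have h1 := hw.hkerw.nonneg s
  have h2 : (0:ℝ) ≤ lam/2 := by linarith [hw.hlam]
  have h3 : (0:ℝ) ≤ (wl lam (1/2))^2/2 + lam/2 := by positivity
  split_ifs with hc1 hc2 <;> linarith

lemma hfun_le : ∀ s, hfun lam s ≤ B lam C := by
  intro s
  unfold hfun gext B
  have h1 := hw.hkerw.nonneg s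
  have h1' := hw.hkerw.bdd s
  have h2 : (0:ℝ) ≤ lam/2 := by linarith [hw.hlam]
  have h3 : (0:ℝ) ≤ (wl lam (1/2))^2/2 := by positivity
  have h4 : (0:ℝ) ≤ C^2/8 := by positivity
  split_ifs with hc1 hc2 <;> linarith

lemma B_nonneg : 0 ≤ B lam C := le_trans (hw.hfun_nonneg 0) (hw.hfun_le 0)

lemma hfun_meas : AEStronglyMeasurable (hfun lam) volume :=
  hw.hkerw.meas.add (gext_meas lam).aestronglyMeasurable

lemma hfun_abs_le : ∀ s, |hfun lam s| ≤ B lam C := by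
  intro s
  rw [abs_of_nonneg (hw.hfun_nonneg s)]
  exact hw.hfun_le s

lemma hfun_ii (a b : ℝ) : IntervalIntegrable (hfun lam) volume a b := by
  rw [intervalIntegrable_iff]
  apply Integrable.mono' (g := fun _ => B lam C)
    (integrableOn_const measure_Ioc_lt_top.ne)
  · exact hw.hfun_meas.restrict
  · exact Eventually.of_forall (fun s => by
      rw [Real.norm_eq_abs]; exact hw.hfun_abs_le s)

lemma hfun_mul_ii (b : ℝ) (hb : 0 ≤ b) :
    IntervalIntegrable (fun s => s * hfun lam s) volume 0 b := by
  rw [intervalIntegrable_iff]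
  apply Integrable.mono' (g := fun _ => b * B lam C)
    (integrableOn_const measure_Ioc_lt_top.ne)
  · exact (measurable_id.aestronglyMeasurable.mul hw.hfun_meas).restrict
  · filter_upwards [ae_restrict_mem measurableSet_Ioc] with s hs
    simp only [show min (0:ℝ) b = 0 by simp [hb], show max (0:ℝ) b = b by simp [hb]] at hs
    rw [Real.norm_eq_abs, abs_mul, abs_of_pos hs.1]
    exact mul_le_mul hs.2 (hw.hfun_abs_le s) (abs_nonneg _) hb

lemma hfun_half_ii : IntervalIntegrable (fun s => (1/2 + s) * hfun lam s) volume 0 (1/2) := by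
  rw [intervalIntegrable_iff]
  apply Integrable.mono' (g := fun _ => B lam C)
    (integrableOn_const measure_Ioc_lt_top.ne)
  · exact ((continuous_const.add continuous_id).aestronglyMeasurable.mul hw.hfun_meas).restrict
  · filter_upwards [ae_restrict_mem measurableSet_Ioc] with s hs
    simp only [show min (0:ℝ) (1/2) = 0 by norm_num, show max (0:ℝ) (1/2) = 1/2 by norm_num] at hs
    rw [Real.norm_eq_abs, abs_mul, abs_of_pos (by linarith [hs.1] : (0:ℝ) < 1/2 + s)]
    calc (1/2 + s) * |hfun lam s| ≤ 1 * B lam C :=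
      mul_le_mul (by linarith [hs.2]) (hw.hfun_abs_le s) (abs_nonneg _) zero_le_one
    _ = B lam C := one_mul _

lemma hfun_contOn : ContinuousOn (hfun lam) (Ioi (0:ℝ)) := by
  intro x hx
  apply ContinuousAt.continuousWithinAt
  rcases lt_trichotomy x (1/2:ℝ) with hlt | heq | hgt
  · -- interior point
    have hxIoo : x ∈ Ioo (0:ℝ) (1/2) := ⟨hx, hlt⟩
    have hxS : x ∈ SS := ⟨hx, hlt.le⟩
    have hSSmem : SS ∈ 𝓝 x := mem_of_superset (Ioo_mem_nhds hx hlt) Ioo_subset_Ioc_self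
    have hwct : ContinuousAt (wl lam) x :=
      (hw.hwcont.continuousWithinAt hxS).continuousAt hSSmem
    have hx8 : (8 * x^2 : ℝ) ≠ 0 := (mul_pos (by norm_num) (pow_pos hx 2)).ne'
    have hin : ContinuousAt (fun s => (wl lam s)^2/(8*s^2) + lam/2) x :=
      ((hwct.pow 2).div (by fun_prop) hx8).add continuousAt_const
    apply hin.congr
    filter_upwards [Ioo_mem_nhds hx hlt] with s hs
    exact (hfun_on_SS lam (⟨hs.1, hs.2.le⟩ : s ∈ SS)).symm
  · -- x = 1/2
    subst heq
    rw [continuousAt_iff_continuous_left_right]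
    constructor
    · -- from the left
      have h12 : (1/2:ℝ) ∈ SS := ⟨by norm_num, le_rfl⟩
      have hwcw : ContinuousWithinAt (wl lam) SS (1/2) := hw.hwcont.continuousWithinAt h12
      have hx8 : (8 * (1/2:ℝ)^2 : ℝ) ≠ 0 := by norm_num
      have hin : ContinuousWithinAt (fun s => (wl lam s)^2/(8*s^2) + lam/2) SS (1/2) :=
        ((hwcw.pow 2).div (Continuous.continuousWithinAt (by fun_prop)) hx8).add
          continuousWithinAt_const
    -- transfer to `Iic`
      have hmem : SS ∈ 𝓝[Iic (1/2:ℝ)] (1/2:ℝ) := by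
        apply mem_nhdsWithin.2
        refine ⟨Ioi (1/4:ℝ), isOpen_Ioi, by norm_num, ?_⟩
        rintro s ⟨hs1, hs2⟩
        exact ⟨by norm_num at hs1 ⊢; linarith, hs2⟩
      have hin2 : ContinuousWithinAt (fun s => (wl lam s)^2/(8*s^2) + lam/2)
          (Iic (1/2:ℝ)) (1/2) := hin.mono_of_mem_nhdsWithin hmem
      apply hin2.congr_of_eventuallyEq
      · filter_upwards [hmem] with s hs
        exact hfun_on_SS lam hs
      · exact hfun_on_SS lam h12
    · -- from the right: constant
      have hval : hfun lam (1/2) = (wl lam (1/2))^2/2 + lam/2 := hfun_ge_half lam le_rfl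
      apply ContinuousWithinAt.congr_of_eventuallyEq
        (continuousWithinAt_const :
          ContinuousWithinAt (fun _ : ℝ => (wl lam (1/2))^2/2 + lam/2) _ _)
      · filter_upwards [self_mem_nhdsWithin] with s hs
        exact hfun_ge_half lam hs
      · exact hval
  · -- x > 1/2
    have hin : ContinuousAt (fun _ : ℝ => (wl lam (1/2))^2/2 + lam/2) x := continuousAt_const
    apply hin.congr
    filter_upwards [Ioi_mem_nhds hgt] with s hs
    exact (hfun_ge_half lam (le_of_lt hs)).symm

lemma hfun_smaf (t : ℝ) (ht : 0 < t) : StronglyMeasurableAtFilter (hfun lam) (𝓝 t) :=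
  ⟨univ, univ_mem, by rw [Measure.restrict_univ]; exact hw.hfun_meas⟩

lemma Vf_hasDeriv {t : ℝ} (ht : 0 < t) : HasDerivAt (Vf lam) (hfun lam t) t := by
  apply intervalIntegral.integral_hasDerivAt_right (hw.hfun_ii 0 t) (hw.hfun_smaf t ht)
  exact (hw.hfun_contOn).continuousAt (Ioi_mem_nhds ht)

lemma Wf_hasDeriv {t : ℝ} (ht : 0 < t) : HasDerivAt (Wf lam) (t * hfun lam t) t := by
  apply intervalIntegral.integral_hasDerivAt_right (hw.hfun_mul_ii t ht.le)
    ⟨univ, univ_mem, by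
      rw [Measure.restrict_univ]
      exact measurable_id.aestronglyMeasurable.mul hw.hfun_meas⟩
  exact continuousAt_id.mul ((hw.hfun_contOn).continuousAt (Ioi_mem_nhds ht))

lemma Uf_hasDeriv {t : ℝ} (ht : 0 < t) : HasDerivAt (Uf lam) (Af lam + Vf lam t) t := by
  have h1 : HasDerivAt (fun u => Af lam * u + u * Vf lam u - Wf lam u)
      (Af lam * 1 + (1 * Vf lam t + t * hfun lam t) - t * hfun lam t) t :=
    (((hasDerivAt_id t).const_mul (Af lam)).add
      ((hasDerivAt_id t).mul (hw.Vf_hasDeriv ht))).sub (hw.Wf_hasDeriv ht)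
  convert h1 using 1
  · rfl
  ring

lemma Uf_deriv {t : ℝ} (ht : 0 < t) : deriv (Uf lam) t = Af lam + Vf lam t :=
  (hw.Uf_hasDeriv ht).deriv

lemma Uf_deriv2 {t : ℝ} (ht : 0 < t) : deriv (deriv (Uf lam)) t = hfun lam t := by
  have hev : deriv (Uf lam) =ᶠ[𝓝 t] fun x => Af lam + Vf lam x := by
    filter_upwards [Ioi_mem_nhds ht] with x hx
    exact hw.Uf_deriv hx
  rw [hev.deriv_eq]
  exact ((hw.Vf_hasDeriv ht).const_add (Af lam)).deriv

end WFacts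

end UfFacts

lemma hfun_eq_Fio (lam : ℝ) {x : ℝ} (hx : x ∈ SS) :
    hfun lam x = Fio lam (wl lam) x := by
  unfold hfun gext
  rw [if_pos hx.2, if_pos hx.1]
  ring

namespace WFacts

variable {lam : ℝ} {β : ℝ → ℝ} {C : ℝ} (hw : WFacts lam β C)
include hw

lemma Uf_eq_wl : ∀ t ∈ SS, Uf lam t = wl lam t := by
  intro t ht
  have e1 : Vf lam t = Pp (Fio lam (wl lam)) t := by
    apply intervalIntegral.integral_congr_ae
    apply Eventually.of_forall
    intro x hx
    rw [uIoc_of_le ht.1.le] at hx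
    exact hfun_eq_Fio lam ⟨hx.1, hx.2.trans ht.2⟩
  have e2 : Wf lam t = Qq (Fio lam (wl lam)) t := by
    apply intervalIntegral.integral_congr_ae
    apply Eventually.of_forall
    intro x hx
    rw [uIoc_of_le ht.1.le] at hx
    rw [hfun_eq_Fio lam ⟨hx.1, hx.2.trans ht.2⟩]
  have e3 : Af lam = Aa (Fio lam (wl lam)) := by
    rw [Af, Aa]
    congr 1
    apply intervalIntegral.integral_congr_ae
    apply Eventually.of_forall
    intro x hx
    rw [uIoc_of_le (by norm_num : (0:ℝ) ≤ 1/2)] at hx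
    rw [hfun_eq_Fio lam hx]
  rw [Uf, e1, e2, e3, ← Kk]
  exact (hw.hfix t ht).symm

lemma Uf_bc : Uf lam (1/2) = deriv (Uf lam) (1/2) := by
  rw [hw.Uf_deriv (by norm_num : (0:ℝ) < 1/2)]
  have key : Af lam = -(Vf lam (1/2) + 2 * Wf lam (1/2)) := by
    rw [Af, Vf, Wf]
    have e : (∫ s in (0:ℝ)..(1/2:ℝ), (1/2 + s) * hfun lam s)
        = (1/2) * (∫ s in (0:ℝ)..(1/2:ℝ), hfun lam s)
          + ∫ s in (0:ℝ)..(1/2:ℝ), s * hfun lam s := by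
      rw [← intervalIntegral.integral_const_mul,
        ← intervalIntegral.integral_add ((hw.hfun_ii 0 (1/2)).const_mul (1/2))
          (hw.hfun_mul_ii (1/2) (by norm_num))]
      congr 1; ext s; ring
    rw [e]
    ring
  rw [Uf]
  linarith [key]

lemma Uf_c2 : C2loc (Uf lam) := by
  have hmain : ContDiffOn ℝ 2 (Uf lam) (Ioi (0:ℝ)) := by
    rw [show (2 : WithTop ℕ∞) = 1 + 1 from rfl]
    rw [contDiffOn_succ_iff_deriv_of_isOpen isOpen_Ioi]
    refine ⟨?_, ?_, ?_⟩
    · intro x hx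
      exact (hw.Uf_hasDeriv hx).differentiableAt.differentiableWithinAt
    · intro h
      simp at h
    · refine ContDiffOn.congr ?_ (fun x hx => hw.Uf_deriv hx)
      · rw [show (1 : WithTop ℕ∞) = 0 + 1 from rfl]
        rw [contDiffOn_succ_iff_deriv_of_isOpen isOpen_Ioi]
        refine ⟨?_, ?_, ?_⟩
        · intro x hx
          exact ((hw.Vf_hasDeriv hx).const_add (Af lam)).differentiableAt.differentiableWithinAt
        · intro h
          simp at h
        · rw [contDiffOn_zero]
          apply ContinuousOn.congr hw.hfun_contOn
          intro x hx
          exact ((hw.Vf_hasDeriv hx).const_add (Af lam)).deriv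
  intro a b ha hb
  apply hmain.mono
  intro x hx
  exact lt_of_lt_of_le ha hx.1

lemma Vf_abs_le {t : ℝ} (ht : 0 ≤ t) : |Vf lam t| ≤ B lam C * t := by
  have : |Vf lam t| ≤ B lam C * |t - 0| := by
    rw [← Real.norm_eq_abs]
    apply intervalIntegral.norm_integral_le_of_norm_le_const
    intro s _
    rw [Real.norm_eq_abs]
    exact hw.hfun_abs_le s
  rwa [show |t - 0| = t by rw [sub_zero, abs_of_nonneg ht]] at this

lemma Uf_sqrt : Tendsto (fun t => Real.sqrt t * deriv (Uf lam) t) (𝓝[>] (0:ℝ)) (𝓝 0) := by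
  have hsq : Tendsto Real.sqrt (𝓝[>] (0:ℝ)) (𝓝 0) := by
    have := Real.continuous_sqrt.tendsto 0
    rw [Real.sqrt_zero] at this
    exact this.mono_left nhdsWithin_le_nhds
  have T1 : Tendsto (fun t => Real.sqrt t * Af lam) (𝓝[>] (0:ℝ)) (𝓝 0) := by
    have := hsq.mul_const (Af lam)
    rwa [zero_mul] at this
  have T2 : Tendsto (fun t => Real.sqrt t * Vf lam t) (𝓝[>] (0:ℝ)) (𝓝 0) := by
    have hb : ∀ᶠ t in 𝓝[>] (0:ℝ),
        ‖Real.sqrt t * Vf lam t‖ ≤ Real.sqrt t * (B lam C * t) := by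
      filter_upwards [self_mem_nhdsWithin] with t ht
      rw [Real.norm_eq_abs, abs_mul, abs_of_nonneg (Real.sqrt_nonneg t)]
      exact mul_le_mul_of_nonneg_left (hw.Vf_abs_le (le_of_lt ht)) (Real.sqrt_nonneg t)
    have hg : Tendsto (fun t : ℝ => Real.sqrt t * (B lam C * t)) (𝓝[>] (0:ℝ)) (𝓝 0) := by
      have h2 : Tendsto (fun t : ℝ => B lam C * t) (𝓝[>] (0:ℝ)) (𝓝 0) := by
        have := (tendsto_id (x := 𝓝 (0:ℝ))).const_mul (B lam C)
        rw [mul_zero] at this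
        exact this.mono_left nhdsWithin_le_nhds
      have := hsq.mul h2
      rwa [zero_mul] at this
    exact squeeze_zero_norm' hb hg
  have Tsum : Tendsto (fun t => Real.sqrt t * Af lam + Real.sqrt t * Vf lam t)
      (𝓝[>] (0:ℝ)) (𝓝 0) := by
    have := T1.add T2
    rwa [add_zero] at this
  apply Tsum.congr'
  filter_upwards [self_mem_nhdsWithin] with t ht
  rw [hw.Uf_deriv ht]
  ring

end WFacts

end

end Stmt15

theorem stmt15 (lam : ℝ) (hlam : 0 ≤ lam) (β : ℝ → ℝ) (hβ : C2loc β)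
    (hupper : ∀ t ∈ Set.Ioc (0:ℝ) (1/2),
      deriv (deriv β) t ≥ β t ^ 2 / (8 * t ^ 2) + lam / 2)
    (hβ0 : Tendsto (fun t => β t / Real.sqrt t) (𝓝[>] (0:ℝ)) (𝓝 0))
    (hβbc : β (1/2) ≥ deriv β (1/2))
    (hβneg : ∀ t ∈ Set.Ioc (0:ℝ) (1/2), β t ≤ 0)
    (hβfin : ∃ L : ℝ, Tendsto (fun t => |β t| / t) (𝓝[>] (0:ℝ)) (𝓝 L))
    (hβlim : Tendsto β (𝓝[>] (0:ℝ)) (𝓝 0)) :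
    ∃ u : ℝ → ℝ, C2loc u ∧
      (∀ t ∈ Set.Ioc (0:ℝ) (1/2),
        deriv (deriv u) t = u t ^ 2 / (8 * t ^ 2) + lam / 2) ∧
      Tendsto (fun t => Real.sqrt t * deriv u t) (𝓝[>] (0:ℝ)) (𝓝 0) ∧
      u (1/2) = deriv u (1/2) ∧
      (∀ t ∈ Set.Ioc (0:ℝ) (1/2), β t ≤ u t ∧ u t ≤ 0) := by
  rcases eq_or_lt_of_le hlam with h0 | hpos
  · -- the case `lam = 0`: the zero function is a solution
    obtain rfl : lam = 0 := h0.symm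
    refine ⟨fun _ => 0, fun a b ha hb => contDiffOn_const, ?_, ?_, ?_, ?_⟩
    · intro t ht
      rw [deriv_const', deriv_const']
      norm_num
    · have : (fun t : ℝ => Real.sqrt t * deriv (fun _ => (0:ℝ)) t) = fun _ => 0 := by
        funext t
        rw [deriv_const']
        ring
      rw [this]
      exact tendsto_const_nhds
    · rw [deriv_const']
    · intro t ht
      exact ⟨hβneg t ht, le_rfl⟩
  · -- the case `lam > 0`: monotone iteration from the upper solution
    obtain ⟨C, hC0, hβC⟩ := Stmt15.bound_exists hβ hβfin
    obtain ⟨hwb, hwcont, hfix, hkerw⟩ :=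
      Stmt15.core lam hpos hC0 hβC hβ hupper hβbc hβneg hβlim
    have hw : Stmt15.WFacts lam β C := ⟨hpos, hwb, hwcont, hfix, hkerw⟩
    refine ⟨Stmt15.Uf lam, hw.Uf_c2, ?_, hw.Uf_sqrt, hw.Uf_bc, ?_⟩
    · intro t ht
      rw [hw.Uf_deriv2 ht.1, Stmt15.hfun_on_SS lam ht, hw.Uf_eq_wl t ht]
    · intro t ht
      rw [hw.Uf_eq_wl t ht]
      exact hwb t ht
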